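/- arXiv:math-ph/9906001 — 3 statements merged into one kernel-verified Lean document; each statement's English description precedes it below -/
import Mathlib

section
/- Let n ∈ ℕ, let ξ : ℝ × ℝⁿ × ℝⁿ → ℝⁿ be smooth, and let K^i_λ : ℝ^(1+n) × ℝ^(1+n) → ℝ (for i = 1,…,n and λ = 0,1,…,n) be smooth functions satisfying ξ^i(t,q,v) = K^i_0((t,q),(1,v)) + Σ_{j=1}^n v^j K^i_j((t,q),(1,v)) for all (t,q,v). Then a smooth curve c : ℝ → ℝⁿ satisfies c''(t) = ξ(t, c(t), c'(t)) for all t if and only if the curve γ : ℝ → ℝ^(1+n), γ(t) = (t, c(t)), satisfies the geodesic equations γ̈⁰(t) = 0, γ̇⁰(t) = 1, and γ̈^i(t) = Σ_{λ=0}^n K^i_λ(γ(t), γ̇(t)) · γ̇^λ(t) for all t and all i = 1,…,n. -/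
/-- Any second order dynamic equation `c'' = ξ(t, c, c')` on the
configuration bundle `ℝ × ℝⁿ → ℝ` is equivalent to the geodesic equation on
`ℝ^(1+n)` for a connection `K` with vanishing temporal components satisfying
`ξ^i = K^i_0 + Σ_j v^j K^i_j` along `q̇⁰ = 1, q̇ = v`. -/
theorem geodesic_form_of_dynamic_equation (n : ℕ)
    (ξ : ℝ → (Fin n → ℝ) → (Fin n → ℝ) → Fin n → ℝ)
    (hξ : ContDiff ℝ (⊤ : ℕ∞)
      fun p : ℝ × (Fin n → ℝ) × (Fin n → ℝ) => ξ p.1 p.2.1 p.2.2)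
    (K : Fin n → Fin (n + 1) → (Fin (n + 1) → ℝ) → (Fin (n + 1) → ℝ) → ℝ)
    (hK : ∀ (i : Fin n) (lam : Fin (n + 1)), ContDiff ℝ (⊤ : ℕ∞)
      fun p : (Fin (n + 1) → ℝ) × (Fin (n + 1) → ℝ) => K i lam p.1 p.2)
    (hcompat : ∀ (t : ℝ) (q v : Fin n → ℝ) (i : Fin n),
      ξ t q v i = K i 0 (Fin.cons t q) (Fin.cons 1 v)
        + ∑ j : Fin n, v j * K i j.succ (Fin.cons t q) (Fin.cons 1 v))
    (c : ℝ → Fin n → ℝ) (hc : ContDiff ℝ (⊤ : ℕ∞) c)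
    (γ : ℝ → Fin (n + 1) → ℝ) (hγ : ∀ t, γ t = Fin.cons t (c t)) :
    (∀ t, deriv (deriv c) t = ξ t (c t) (deriv c t)) ↔
      (∀ t, deriv (deriv γ) t 0 = 0 ∧ deriv γ t 0 = 1 ∧
        ∀ i : Fin n, deriv (deriv γ) t i.succ =
          ∑ lam : Fin (n + 1), K i lam (γ t) (deriv γ t) * deriv γ t lam) := by
  have hγe : γ = fun t => (Fin.cons t (c t) : Fin (n+1) → ℝ) := by funext t; exact hγ t
  subst hγe
  have hc' : ∀ t, HasDerivAt c (deriv c t) t := fun t =>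
    (hc.differentiable (by norm_num) t).hasDerivAt
  have hdc2 : ContDiff ℝ (⊤ : ℕ∞) (deriv c) := (contDiff_infty_iff_deriv.mp hc).2
  have hc'' : ∀ t, HasDerivAt (deriv c) (deriv (deriv c) t) t := fun t =>
    (hdc2.differentiable (by norm_num) t).hasDerivAt
  have hγ1 : ∀ t, HasDerivAt (fun t => Fin.cons t (c t) : ℝ → Fin (n+1) → ℝ)
      (Fin.cons 1 (deriv c t)) t := by
    intro t
    rw [hasDerivAt_pi]
    intro i
    refine Fin.cases ?_ ?_ i
    · simpa using hasDerivAt_id' t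
    · intro j
      simpa using (hasDerivAt_pi.1 (hc' t)) j
  have hdγ : deriv (fun t => Fin.cons t (c t) : ℝ → Fin (n+1) → ℝ)
      = fun t => Fin.cons 1 (deriv c t) := funext fun t => (hγ1 t).deriv
  have hγ2 : ∀ t, HasDerivAt (fun t => (Fin.cons 1 (deriv c t) : Fin (n+1) → ℝ))
      (Fin.cons 0 (deriv (deriv c) t)) t := by
    intro t
    rw [hasDerivAt_pi]
    intro i
    refine Fin.cases ?_ ?_ i
    · simpa using hasDerivAt_const t (1 : ℝ)
    · intro j
      simpa using (hasDerivAt_pi.1 (hc'' t)) j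
  have hddγ : ∀ t, deriv (deriv (fun t => Fin.cons t (c t) : ℝ → Fin (n+1) → ℝ)) t
      = Fin.cons 0 (deriv (deriv c) t) := by
    intro t
    rw [hdγ]
    exact (hγ2 t).deriv
  have hsum : ∀ t (i : Fin n),
      (∑ lam : Fin (n + 1), K i lam (Fin.cons t (c t))
        (deriv (fun t => Fin.cons t (c t) : ℝ → Fin (n+1) → ℝ) t)
        * deriv (fun t => Fin.cons t (c t) : ℝ → Fin (n+1) → ℝ) t lam)
      = ξ t (c t) (deriv c t) i := by
    intro t i
    rw [hdγ, hcompat t (c t) (deriv c t) i]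
    simp [Fin.sum_univ_succ, mul_comm]
  constructor
  · intro h t
    refine ⟨?_, ?_, ?_⟩
    · rw [hddγ t]; simp
    · rw [hdγ]; simp
    · intro i
      rw [hddγ t, hsum t i]
      simp [h t]
  · intro h t
    funext i
    have h3 := (h t).2.2 i
    rw [hddγ t, hsum t i] at h3
    simpa using h3
end

section
/- Let ξ : ℝ × ℝⁿ × ℝⁿ → ℝⁿ be smooth and let K^i_λ : ℝ^(1+n) × ℝ^(1+n) → ℝ be smooth connection components with vanishing temporal part satisfying ξ^i(t,q,v) = K^i_0((t,q),(1,v)) + Σ_j v^j K^i_j((t,q),(1,v)). Let s : ℝ^(1+n) → ℝ and h^i_λ : ℝ^(1+n) → ℝ be arbitrary smooth functions, and define the soldering form σ with components σ⁰_λ = 0, σ^i_k(q, q̇) = h^i_k(q) + (s(q) − 1) h^i_k(q) q̇⁰, and σ^i_0(q, q̇) = −s(q) Σ_k h^i_k(q) q̇^k − h^i_0(q) q̇⁰ + h^i_0(q). Then the modified connection K' = K + σ, with components K'^i_λ(q,q̇) = K^i_λ(q,q̇) + σ^i_λ(q,q̇), also satisfies K'^i_0((t,q),(1,v)) + Σ_j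 v^j K'^i_j((t,q),(1,v)) = ξ^i(t,q,v) for all (t,q,v); consequently a smooth curve c : ℝ → ℝⁿ satisfies c'' = ξ(t, c, c') if and only if γ(t) = (t, c(t)) satisfies γ̈⁰ = 0, γ̇⁰ = 1 and γ̈^i = Σ_λ K'^i_λ(γ, γ̇) γ̇^λ. -/
/-- modifying a connection (with vanishing temporal components)
representing a dynamic equation `ξ` by the soldering form `σ` with
`σ⁰_λ = 0`, `σ^i_k = h^i_k + (s − 1) h^i_k q̇⁰`,
`σ^i_0 = −s h^i_k q̇^k − h^i_0 q̇⁰ + h^i_0`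
yields another connection representing the same dynamic equation, hence the
same geodesic description of solutions. -/
theorem soldering_form_preserves_dynamic_equation (n : ℕ)
    (ξ : ℝ → (Fin n → ℝ) → (Fin n → ℝ) → Fin n → ℝ)
    (hξ : ContDiff ℝ (⊤ : ℕ∞)
      fun p : ℝ × (Fin n → ℝ) × (Fin n → ℝ) => ξ p.1 p.2.1 p.2.2)
    (K : Fin n → Fin (n + 1) → (Fin (n + 1) → ℝ) → (Fin (n + 1) → ℝ) → ℝ)
    (hK : ∀ (i : Fin n) (lam : Fin (n + 1)), ContDiff ℝ (⊤ : ℕ∞)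
      fun p : (Fin (n + 1) → ℝ) × (Fin (n + 1) → ℝ) => K i lam p.1 p.2)
    (hcompat : ∀ (t : ℝ) (q v : Fin n → ℝ) (i : Fin n),
      ξ t q v i = K i 0 (Fin.cons t q) (Fin.cons 1 v)
        + ∑ j : Fin n, v j * K i j.succ (Fin.cons t q) (Fin.cons 1 v))
    (s : (Fin (n + 1) → ℝ) → ℝ) (hs : ContDiff ℝ (⊤ : ℕ∞) s)
    (h : Fin n → Fin (n + 1) → (Fin (n + 1) → ℝ) → ℝ)
    (hh : ∀ (i : Fin n) (lam : Fin (n + 1)), ContDiff ℝ (⊤ : ℕ∞) (h i lam))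
    (σ : Fin n → Fin (n + 1) → (Fin (n + 1) → ℝ) → (Fin (n + 1) → ℝ) → ℝ)
    (hσk : ∀ (i k : Fin n) (q q' : Fin (n + 1) → ℝ),
      σ i k.succ q q' = h i k.succ q + (s q - 1) * h i k.succ q * q' 0)
    (hσ0 : ∀ (i : Fin n) (q q' : Fin (n + 1) → ℝ),
      σ i 0 q q' = -(s q) * (∑ k : Fin n, h i k.succ q * q' k.succ)
        - h i 0 q * q' 0 + h i 0 q)
    (K' : Fin n → Fin (n + 1) → (Fin (n + 1) → ℝ) → (Fin (n + 1) → ℝ) → ℝ)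
    (hK' : ∀ (i : Fin n) (lam : Fin (n + 1)) (q q' : Fin (n + 1) → ℝ),
      K' i lam q q' = K i lam q q' + σ i lam q q') :
    (∀ (t : ℝ) (q v : Fin n → ℝ) (i : Fin n),
      K' i 0 (Fin.cons t q) (Fin.cons 1 v)
        + ∑ j : Fin n, v j * K' i j.succ (Fin.cons t q) (Fin.cons 1 v) = ξ t q v i) ∧
    (∀ (c : ℝ → Fin n → ℝ), ContDiff ℝ (⊤ : ℕ∞) c →
      ∀ (γ : ℝ → Fin (n + 1) → ℝ), (∀ t, γ t = Fin.cons t (c t)) →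
      ((∀ t, deriv (deriv c) t = ξ t (c t) (deriv c t)) ↔
        (∀ t, deriv (deriv γ) t 0 = 0 ∧ deriv γ t 0 = 1 ∧
          ∀ i : Fin n, deriv (deriv γ) t i.succ =
            ∑ lam : Fin (n + 1), K' i lam (γ t) (deriv γ t) * deriv γ t lam))) := by
  have key : ∀ (t : ℝ) (q v : Fin n → ℝ) (i : Fin n),
      K' i 0 (Fin.cons t q) (Fin.cons 1 v)
        + ∑ j : Fin n, v j * K' i j.succ (Fin.cons t q) (Fin.cons 1 v) = ξ t q v i := by
    intro t q v i
    have hσsum : σ i 0 (Fin.cons t q) (Fin.cons 1 v)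
        + ∑ j : Fin n, v j * σ i j.succ (Fin.cons t q) (Fin.cons 1 v) = 0 := by
      have hs2 : (∑ j : Fin n, v j * σ i j.succ (Fin.cons t q) (Fin.cons 1 v))
          = s (Fin.cons t q)
            * ∑ k : Fin n, h i k.succ (Fin.cons t q) * (Fin.cons 1 v : Fin (n+1) → ℝ) k.succ := by
        rw [Finset.mul_sum]
        apply Finset.sum_congr rfl
        intro j _
        rw [hσk]
        simp only [Fin.cons_zero, Fin.cons_succ, mul_one]
        ring
      rw [hσ0, hs2]
      simp only [Fin.cons_zero]
      ring
    rw [hcompat]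
    simp only [hK', mul_add, Finset.sum_add_distrib]
    linarith [hσsum]
  refine ⟨key, ?_⟩
  intro c hc γ hγ
  have hγfun : γ = fun u => (Fin.cons u (c u) : Fin (n + 1) → ℝ) := by funext u; exact hγ u
  have hc1 : Differentiable ℝ c := hc.differentiable (by norm_num)
  have hc' : ContDiff ℝ (⊤ : ℕ∞) (deriv c) := (contDiff_infty_iff_deriv.mp hc).2
  have hc'1 : Differentiable ℝ (deriv c) := hc'.differentiable (by norm_num)
  have hγd : ∀ t, HasDerivAt γ (Fin.cons 1 (deriv c t)) t := by
    intro t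
    rw [hγfun, hasDerivAt_pi]
    intro i
    refine Fin.cases ?_ ?_ i
    · simp only [Fin.cons_zero]; exact hasDerivAt_id' t
    · intro j
      have h1 := hasDerivAt_pi.mp (hc1 t).hasDerivAt j
      simpa using h1
  have hγ' : deriv γ = fun t => Fin.cons 1 (deriv c t) := funext fun t => (hγd t).deriv
  have hγ'' : ∀ t, deriv (deriv γ) t = Fin.cons 0 (deriv (deriv c) t) := by
    intro t
    rw [hγ']
    have H : HasDerivAt (fun t => (Fin.cons 1 (deriv c t) : Fin (n + 1) → ℝ))
        (Fin.cons 0 (deriv (deriv c) t)) t := by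
      rw [hasDerivAt_pi]
      intro i
      refine Fin.cases ?_ ?_ i
      · simpa using (hasDerivAt_const t (1 : ℝ))
      · intro j
        have h1 := hasDerivAt_pi.mp (hc'1 t).hasDerivAt j
        simpa using h1
    exact H.deriv
  have hsum : ∀ t (i : Fin n),
      (∑ lam : Fin (n + 1), K' i lam (γ t) (deriv γ t) * deriv γ t lam)
        = ξ t (c t) (deriv c t) i := by
    intro t i
    rw [hγ', hγ t, ← key t (c t) (deriv c t) i, Fin.sum_univ_succ]
    simp only [Fin.cons_zero, Fin.cons_succ, mul_one]
    congr 1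
    apply Finset.sum_congr rfl
    intro j _
    ring
  constructor
  · intro H t
    refine ⟨by rw [hγ'' t]; simp, by rw [hγ']; simp, ?_⟩
    intro i
    rw [hγ'' t, Fin.cons_succ, hsum t i, ← H t]
  · intro H t
    funext i
    have h2 := (H t).2.2 i
    rw [hγ'' t, Fin.cons_succ, hsum t i] at h2
    exact h2
end

section
/- Let φ : ℝ × ℝⁿ → ℝⁿ be smooth such that for each t the map φ(t, ·) : ℝⁿ → ℝⁿ is a diffeomorphism, with jointly smooth inverse ψ : ℝ × ℝⁿ → ℝⁿ (so ψ(t, φ(t, x)) = x). Define Γ^i(t, q) := ∂_t φ^i(t, ψ(t, q)). Then a smooth curve c̄ : ℝ → ℝⁿ satisfies c̄''(t) = 0 for all t if and only if the curve c(t) := φ(t, c̄(t)) satisfies, for all t, c̈^i = ∂_t Γ^i(t,c) + Σ_j ċ^j ∂_j Γ^i(t,c) + Σ_j ∂_j Γ^i(t,c) (ċ^j − Γ^j(t,c)) − Σ_{m,j,k} (∂φ^i/∂x^m)(t, ψ(t,c)) · (∂²ψ^m/∂q^j∂q^k)(t,c) · (ċ^j − Γ^j(t,c))(ċ^k − Γ^k(t,c)),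 where the middle term d_tΓ^i = ∂_tΓ^i + Σ_j ċ^j ∂_jΓ^i. -/
/-- Partial derivative of `f : ℝⁿ → ℝ` in the `j`-th coordinate direction. -/
noncomputable def pdir {n : ℕ} (f : (Fin n → ℝ) → ℝ) (v : Fin n → ℝ) (j : Fin n) : ℝ :=
  fderiv ℝ f v (Pi.single j 1)

private lemma sum_single_mul {n : ℕ} (M : (Fin n → ℝ) →L[ℝ] ℝ) (x : Fin n → ℝ)
    (g : Fin n → ℝ) (hg : ∀ j, g j = M (Pi.single j 1)) :
    ∑ j, x j * g j = M x := by
  have h1 : ∀ j : Fin n, x j * g j = M (Pi.single j (x j)) := by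
    intro j
    have h2 : Pi.single j (x j) = x j • (Pi.single j 1 : Fin n → ℝ) := by
      funext k
      by_cases h : k = j
      · subst h; simp
      · simp [Pi.single_eq_of_ne h]
    rw [h2, map_smul, smul_eq_mul, hg j]
  rw [Finset.sum_congr rfl fun j _ => h1 j, ← map_sum, Finset.univ_sum_single]

private lemma sum_single_mul' {n : ℕ} (M : (Fin n → ℝ) →L[ℝ] ℝ) (x : Fin n → ℝ)
    (g : Fin n → ℝ) (hg : ∀ j, g j = M (Pi.single j 1)) :
    ∑ j, g j * x j = M x := by
  rw [Finset.sum_congr rfl fun j (_ : j ∈ Finset.univ) => mul_comm (g j) (x j)]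
  exact sum_single_mul M x g hg

set_option maxHeartbeats 1000000 in
private lemma master {n : ℕ} (φ ψ : ℝ → (Fin n → ℝ) → (Fin n → ℝ))
    (hφ : ContDiff ℝ (⊤ : ℕ∞) fun p : ℝ × (Fin n → ℝ) => φ p.1 p.2)
    (hψ : ContDiff ℝ (⊤ : ℕ∞) fun p : ℝ × (Fin n → ℝ) => ψ p.1 p.2)
    (hinv : ∀ t x, ψ t (φ t x) = x) (hinv' : ∀ t q, φ t (ψ t q) = q)
    (Γ : ℝ → (Fin n → ℝ) → Fin n → ℝ)
    (hΓ : ∀ t q i, Γ t q i = deriv (fun s => φ s (ψ t q) i) t)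
    (cb : ℝ → Fin n → ℝ) (hcb : ContDiff ℝ (⊤ : ℕ∞) cb)
    (c : ℝ → Fin n → ℝ) (hc : ∀ t, c t = φ t (cb t)) (t : ℝ) (i : Fin n) :
    deriv (deriv c) t i =
      (deriv (fun s => Γ s (c t) i) t
        + (∑ j : Fin n, deriv c t j * pdir (fun q => Γ t q i) (c t) j)
        + (∑ j : Fin n, pdir (fun q => Γ t q i) (c t) j * (deriv c t j - Γ t (c t) j))
        - ∑ m : Fin n, ∑ j : Fin n, ∑ k : Fin n,
            pdir (fun x => φ t x i) (ψ t (c t)) m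
              * pdir (fun q => pdir (fun q' => ψ t q' m) q k) (c t) j
              * (deriv c t j - Γ t (c t) j) * (deriv c t k - Γ t (c t) k))
      + fderiv ℝ (fun p : ℝ × (Fin n → ℝ) => φ p.1 p.2) (t, cb t)
          ((0 : ℝ), deriv (deriv cb) t) i := by
  classical
  have hceq : c = fun s => φ s (cb s) := funext hc
  subst hceq
  have hFd : Differentiable ℝ (fun p : ℝ × (Fin n → ℝ) => φ p.1 p.2) :=
    hφ.differentiable (by simp)
  have hGd : Differentiable ℝ (fun p : ℝ × (Fin n → ℝ) => ψ p.1 p.2) :=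
    hψ.differentiable (by simp)
  set DF := fderiv ℝ (fun p : ℝ × (Fin n → ℝ) => φ p.1 p.2) with hDFdef
  set DG := fderiv ℝ (fun p : ℝ × (Fin n → ℝ) => ψ p.1 p.2) with hDGdef
  have hDF : ∀ p, HasFDerivAt (fun p : ℝ × (Fin n → ℝ) => φ p.1 p.2) (DF p) p :=
    fun p => (hFd p).hasFDerivAt
  have hDG : ∀ p, HasFDerivAt (fun p : ℝ × (Fin n → ℝ) => ψ p.1 p.2) (DG p) p :=
    fun p => (hGd p).hasFDerivAt
  have hDFs : ContDiff ℝ (⊤ : ℕ∞) DF := hφ.fderiv_right (by simp)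
  have hDGs : ContDiff ℝ (⊤ : ℕ∞) DG := hψ.fderiv_right (by simp)
  have hDFd : Differentiable ℝ DF := hDFs.differentiable (by simp)
  have hDGd : Differentiable ℝ DG := hDGs.differentiable (by simp)
  have hΓeq : Γ = fun s q => DF (s, ψ s q) ((1:ℝ), (0 : Fin n → ℝ)) := by
    funext s q i'
    rw [hΓ s q i']
    have h2 : HasDerivAt (fun r => φ r (ψ s q)) (DF (s, ψ s q) (1, 0)) s :=
      by have := (hDF (s, ψ s q)).comp_hasDerivAt s (HasDerivAt.prodMk (hasDerivAt_id s) (hasDerivAt_const s (ψ s q))); exact this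
    have h3 : HasDerivAt (fun r => φ r (ψ s q) i') (DF (s, ψ s q) (1, 0) i') s :=
      (ContinuousLinearMap.proj i' : (Fin n → ℝ) →L[ℝ] ℝ).hasFDerivAt.comp_hasDerivAt s h2
    exact h3.deriv
  subst hΓeq
  beta_reduce
  rw [hinv t (cb t)]
  have hq0 : ψ t (φ t (cb t)) = cb t := hinv t (cb t)
  have hcbd : Differentiable ℝ cb := hcb.differentiable (by simp)
  have hγ : ∀ s, HasDerivAt (fun r : ℝ => ((r, cb r) : ℝ × (Fin n → ℝ))) ((1 : ℝ), deriv cb s) s :=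
    fun s => HasDerivAt.prodMk (hasDerivAt_id s) (hcbd s).hasDerivAt
  have hc1 : ∀ s, HasDerivAt (fun r => φ r (cb r)) (DF (s, cb s) (1, deriv cb s)) s :=
    fun s => by have := (hDF (s, cb s)).comp_hasDerivAt s (hγ s); exact this
  have hdc_fun : deriv (fun s => φ s (cb s)) = fun s => DF (s, cb s) (1, deriv cb s) :=
    funext fun s => (hc1 s).deriv
  have hdc : deriv (fun s => φ s (cb s)) t = DF (t, cb t) (1, deriv cb t) := (hc1 t).deriv
  have hcb' : ContDiff ℝ (⊤ : ℕ∞) (deriv cb) := by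
    have h' : ContDiff ℝ ((⊤ : ℕ∞) : WithTop ℕ∞) cb := hcb
    exact (contDiff_infty_iff_deriv.mp h').2
  have hcb2 : HasDerivAt (deriv cb) (deriv (deriv cb) t) t :=
    ((hcb'.differentiable (by simp)) t).hasDerivAt
  set S := fderiv ℝ DF (t, cb t) with hSdef
  set SG := fderiv ℝ DG (t, φ t (cb t)) with hSGdef
  have hSfd : HasFDerivAt DF S (t, cb t) := (hDFd _).hasFDerivAt
  have hSGfd : HasFDerivAt DG SG (t, φ t (cb t)) := (hDGd _).hasFDerivAt
  have hsym : ∀ x y, S x y = S y x := second_derivative_symmetric hDF hSfd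
  have hB : HasDerivAt (fun s => DF (s, cb s)) (S (1, deriv cb t)) t :=
    hSfd.comp_hasDerivAt t (hγ t)
  have hw : HasDerivAt (fun s => (((1:ℝ), deriv cb s) : ℝ × (Fin n → ℝ)))
      ((0:ℝ), deriv (deriv cb) t) t := HasDerivAt.prodMk (hasDerivAt_const t (1:ℝ)) hcb2
  have hddc : deriv (deriv (fun s => φ s (cb s))) t
      = S (1, deriv cb t) (1, deriv cb t) + DF (t, cb t) (0, deriv (deriv cb) t) := by
    rw [hdc_fun]
    exact (hB.clm_apply hw).deriv
  -- Term 1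
  have hδ : HasDerivAt (fun s : ℝ => ((s, ψ s (φ t (cb t))) : ℝ × (Fin n → ℝ)))
      ((1:ℝ), DG (t, φ t (cb t)) (1, 0)) t := by
    refine HasDerivAt.prodMk (hasDerivAt_id t) ?_
    have := (hDG (t, φ t (cb t))).comp_hasDerivAt t (HasDerivAt.prodMk (hasDerivAt_id t) (hasDerivAt_const t (φ t (cb t)))); exact this
  have hDFδ : HasFDerivAt DF S (t, ψ t (φ t (cb t))) := by rw [hq0]; exact hSfd
  have hT1a : HasDerivAt (fun s => DF (s, ψ s (φ t (cb t))))
      (S (1, DG (t, φ t (cb t)) (1, 0))) t := hDFδ.comp_hasDerivAt t hδ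
  have hT1b : HasDerivAt (fun s => DF (s, ψ s (φ t (cb t))) ((1:ℝ), (0 : Fin n → ℝ)))
      (S (1, DG (t, φ t (cb t)) (1, 0)) ((1:ℝ), (0 : Fin n → ℝ))
        + DF (t, ψ t (φ t (cb t))) 0) t := by
    have := hT1a.clm_apply (hasDerivAt_const t (((1:ℝ), (0 : Fin n → ℝ)) : ℝ × (Fin n → ℝ)))
    simpa using this
  have hT1 : deriv (fun s => DF (s, ψ s (φ t (cb t))) ((1:ℝ), (0 : Fin n → ℝ)) i) t
      = S (1, DG (t, φ t (cb t)) (1, 0)) ((1:ℝ), (0 : Fin n → ℝ)) i := by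
    have h3 : HasDerivAt (fun s => DF (s, ψ s (φ t (cb t))) ((1:ℝ), (0 : Fin n → ℝ)) i)
        ((S (1, DG (t, φ t (cb t)) (1, 0)) ((1:ℝ), (0 : Fin n → ℝ))
          + DF (t, ψ t (φ t (cb t))) 0) i) t :=
      (ContinuousLinearMap.proj i : (Fin n → ℝ) →L[ℝ] ℝ).hasFDerivAt.comp_hasDerivAt t hT1b
    rw [h3.deriv]
    simp
  simp only [pdir]
  rw [hT1, hddc]
  simp only [hdc]
  -- pdir of Γ in space direction
  have hP1 : ∀ j : Fin n,
      fderiv ℝ (fun q => DF (t, ψ t q) ((1:ℝ), (0 : Fin n → ℝ)) i) (φ t (cb t)) (Pi.single j 1)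
        = S ((0:ℝ), DG (t, φ t (cb t)) ((0:ℝ), Pi.single j 1)) ((1:ℝ), (0 : Fin n → ℝ)) i := by
    intro j
    have hin : HasFDerivAt (fun q : Fin n → ℝ => ((t, ψ t q) : ℝ × (Fin n → ℝ)))
        (((0 : (Fin n → ℝ) →L[ℝ] ℝ)).prod
          ((DG (t, φ t (cb t))).comp (ContinuousLinearMap.inr ℝ ℝ (Fin n → ℝ)))) (φ t (cb t)) :=
      HasFDerivAt.prodMk (hasFDerivAt_const t _)
        ((hDG (t, φ t (cb t))).comp _ (hasFDerivAt_prodMk_right t _))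
    have h2 : HasFDerivAt (fun q : Fin n → ℝ => DF (t, ψ t q))
        (S.comp (((0 : (Fin n → ℝ) →L[ℝ] ℝ)).prod
          ((DG (t, φ t (cb t))).comp (ContinuousLinearMap.inr ℝ ℝ (Fin n → ℝ))))) (φ t (cb t)) :=
      hDFδ.comp (φ t (cb t)) hin
    have h3 := h2.clm_apply (hasFDerivAt_const (((1:ℝ), (0 : Fin n → ℝ)) : ℝ × (Fin n → ℝ)) (φ t (cb t)))
    have h4 : HasFDerivAt (fun q : Fin n → ℝ => DF (t, ψ t q) ((1:ℝ), (0 : Fin n → ℝ)) i) _ (φ t (cb t)) :=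
      (ContinuousLinearMap.proj i : (Fin n → ℝ) →L[ℝ] ℝ).hasFDerivAt.comp _ h3
    rw [h4.fderiv]
    simp
  -- pdir of φ in space direction
  have hPφ : ∀ m : Fin n,
      fderiv ℝ (fun x => φ t x i) (cb t) (Pi.single m 1)
        = DF (t, cb t) ((0:ℝ), Pi.single m 1) i := by
    intro m
    have h2 : HasFDerivAt (fun x : Fin n → ℝ => φ t x)
        ((DF (t, cb t)).comp (ContinuousLinearMap.inr ℝ ℝ (Fin n → ℝ))) (cb t) :=
      (hDF (t, cb t)).comp _ (hasFDerivAt_prodMk_right t _)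
    have h3 : HasFDerivAt (fun x : Fin n → ℝ => φ t x i) _ (cb t) :=
      (ContinuousLinearMap.proj i : (Fin n → ℝ) →L[ℝ] ℝ).hasFDerivAt.comp _ h2
    rw [h3.fderiv]
    simp
  -- second space derivative of ψ
  have hinner : ∀ (k : Fin n) (m : Fin n) (q : Fin n → ℝ),
      fderiv ℝ (fun q' => ψ t q' m) q (Pi.single k 1) = DG (t, q) ((0:ℝ), Pi.single k 1) m := by
    intro k m q
    have h2 : HasFDerivAt (fun q' : Fin n → ℝ => ψ t q')
        ((DG (t, q)).comp (ContinuousLinearMap.inr ℝ ℝ (Fin n → ℝ))) q :=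
      (hDG (t, q)).comp _ (hasFDerivAt_prodMk_right t _)
    have h3 : HasFDerivAt (fun q' : Fin n → ℝ => ψ t q' m) _ q :=
      (ContinuousLinearMap.proj m : (Fin n → ℝ) →L[ℝ] ℝ).hasFDerivAt.comp _ h2
    rw [h3.fderiv]
    simp
  have hPψ2 : ∀ (m j k : Fin n),
      fderiv ℝ (fun q => fderiv ℝ (fun q' => ψ t q' m) q (Pi.single k 1)) (φ t (cb t)) (Pi.single j 1)
        = SG ((0:ℝ), Pi.single j 1) ((0:ℝ), Pi.single k 1) m := by
    intro m j k
    have heq : (fun q => fderiv ℝ (fun q' => ψ t q' m) q (Pi.single k 1))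
        = fun q => DG (t, q) ((0:ℝ), Pi.single k 1) m := funext fun q => hinner k m q
    rw [heq]
    have h2 : HasFDerivAt (fun q : Fin n → ℝ => DG (t, q))
        (SG.comp (ContinuousLinearMap.inr ℝ ℝ (Fin n → ℝ))) (φ t (cb t)) :=
      hSGfd.comp _ (hasFDerivAt_prodMk_right t _)
    have h3 := h2.clm_apply (hasFDerivAt_const (((0:ℝ), Pi.single k 1) : ℝ × (Fin n → ℝ)) (φ t (cb t)))
    have h4 : HasFDerivAt (fun q : Fin n → ℝ => DG (t, q) ((0:ℝ), Pi.single k 1) m) _ (φ t (cb t)) :=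
      (ContinuousLinearMap.proj m : (Fin n → ℝ) →L[ℝ] ℝ).hasFDerivAt.comp _ h3
    rw [h4.fderiv]
    simp
  have hsub : ∀ j : Fin n,
      DF (t, cb t) (1, deriv cb t) j - DF (t, cb t) (1, 0) j
        = DF (t, cb t) ((0:ℝ), deriv cb t) j := by
    intro j
    have hpair : ((1:ℝ), deriv cb t) = (((1:ℝ), (0 : Fin n → ℝ)) : ℝ × (Fin n → ℝ)) + ((0:ℝ), deriv cb t) := by
      simp
    rw [hpair, map_add]
    simp
  simp only [hP1, hPφ, hPψ2, hsub]
  -- collapse the sums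
  have hsum2 : (∑ j : Fin n, DF (t, cb t) (1, deriv cb t) j
        * S ((0:ℝ), DG (t, φ t (cb t)) ((0:ℝ), Pi.single j 1)) ((1:ℝ), (0 : Fin n → ℝ)) i)
      = S ((0:ℝ), DG (t, φ t (cb t)) ((0:ℝ), DF (t, cb t) (1, deriv cb t)))
          ((1:ℝ), (0 : Fin n → ℝ)) i := by
    have := sum_single_mul
      ((ContinuousLinearMap.proj i).comp
        ((ContinuousLinearMap.apply ℝ (Fin n → ℝ) (((1:ℝ), (0 : Fin n → ℝ)) : ℝ × (Fin n → ℝ))).comp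
          (S.comp ((ContinuousLinearMap.inr ℝ ℝ (Fin n → ℝ)).comp
            ((DG (t, φ t (cb t))).comp (ContinuousLinearMap.inr ℝ ℝ (Fin n → ℝ)))))))
      (DF (t, cb t) (1, deriv cb t))
      (fun j => S ((0:ℝ), DG (t, φ t (cb t)) ((0:ℝ), Pi.single j 1)) ((1:ℝ), (0 : Fin n → ℝ)) i)
      (fun j => by simp)
    simpa using this
  have hsum3 : (∑ j : Fin n,
        S ((0:ℝ), DG (t, φ t (cb t)) ((0:ℝ), Pi.single j 1)) ((1:ℝ), (0 : Fin n → ℝ)) i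
          * DF (t, cb t) ((0:ℝ), deriv cb t) j)
      = S ((0:ℝ), DG (t, φ t (cb t)) ((0:ℝ), DF (t, cb t) ((0:ℝ), deriv cb t)))
          ((1:ℝ), (0 : Fin n → ℝ)) i := by
    have := sum_single_mul'
      ((ContinuousLinearMap.proj i).comp
        ((ContinuousLinearMap.apply ℝ (Fin n → ℝ) (((1:ℝ), (0 : Fin n → ℝ)) : ℝ × (Fin n → ℝ))).comp
          (S.comp ((ContinuousLinearMap.inr ℝ ℝ (Fin n → ℝ)).comp
            ((DG (t, φ t (cb t))).comp (ContinuousLinearMap.inr ℝ ℝ (Fin n → ℝ)))))))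
      (DF (t, cb t) ((0:ℝ), deriv cb t))
      (fun j => S ((0:ℝ), DG (t, φ t (cb t)) ((0:ℝ), Pi.single j 1)) ((1:ℝ), (0 : Fin n → ℝ)) i)
      (fun j => by simp)
    simpa using this
  have hkin : ∀ (j m : Fin n),
      (∑ k : Fin n, DF (t, cb t) ((0:ℝ), deriv cb t) k
          * SG ((0:ℝ), Pi.single j 1) ((0:ℝ), Pi.single k 1) m)
        = SG ((0:ℝ), Pi.single j 1) ((0:ℝ), DF (t, cb t) ((0:ℝ), deriv cb t)) m := by
    intro j m
    have := sum_single_mul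
      ((ContinuousLinearMap.proj m).comp
        ((SG ((0:ℝ), Pi.single j 1)).comp (ContinuousLinearMap.inr ℝ ℝ (Fin n → ℝ))))
      (DF (t, cb t) ((0:ℝ), deriv cb t))
      (fun k => SG ((0:ℝ), Pi.single j 1) ((0:ℝ), Pi.single k 1) m)
      (fun k => by simp)
    simpa using this
  have hjin : ∀ m : Fin n,
      (∑ j : Fin n, DF (t, cb t) ((0:ℝ), deriv cb t) j
          * SG ((0:ℝ), Pi.single j 1) ((0:ℝ), DF (t, cb t) ((0:ℝ), deriv cb t)) m)
        = SG ((0:ℝ), DF (t, cb t) ((0:ℝ), deriv cb t))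
            ((0:ℝ), DF (t, cb t) ((0:ℝ), deriv cb t)) m := by
    intro m
    have := sum_single_mul
      ((ContinuousLinearMap.proj m).comp
        ((ContinuousLinearMap.apply ℝ (Fin n → ℝ)
            (((0:ℝ), DF (t, cb t) ((0:ℝ), deriv cb t)) : ℝ × (Fin n → ℝ))).comp
          (SG.comp (ContinuousLinearMap.inr ℝ ℝ (Fin n → ℝ)))))
      (DF (t, cb t) ((0:ℝ), deriv cb t))
      (fun j => SG ((0:ℝ), Pi.single j 1) ((0:ℝ), DF (t, cb t) ((0:ℝ), deriv cb t)) m)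
      (fun j => by simp)
    simpa using this
  have hmin : (∑ m : Fin n, DF (t, cb t) ((0:ℝ), Pi.single m 1) i
        * SG ((0:ℝ), DF (t, cb t) ((0:ℝ), deriv cb t))
            ((0:ℝ), DF (t, cb t) ((0:ℝ), deriv cb t)) m)
      = DF (t, cb t) ((0:ℝ), SG ((0:ℝ), DF (t, cb t) ((0:ℝ), deriv cb t))
            ((0:ℝ), DF (t, cb t) ((0:ℝ), deriv cb t))) i := by
    have := sum_single_mul'
      ((ContinuousLinearMap.proj i).comp
        ((DF (t, cb t)).comp (ContinuousLinearMap.inr ℝ ℝ (Fin n → ℝ))))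
      (SG ((0:ℝ), DF (t, cb t) ((0:ℝ), deriv cb t))
          ((0:ℝ), DF (t, cb t) ((0:ℝ), deriv cb t)))
      (fun m => DF (t, cb t) ((0:ℝ), Pi.single m 1) i)
      (fun m => by simp)
    simpa using this
  have hsum4 : (∑ m : Fin n, ∑ j : Fin n, ∑ k : Fin n,
        DF (t, cb t) ((0:ℝ), Pi.single m 1) i
          * SG ((0:ℝ), Pi.single j 1) ((0:ℝ), Pi.single k 1) m
          * DF (t, cb t) ((0:ℝ), deriv cb t) j
          * DF (t, cb t) ((0:ℝ), deriv cb t) k)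
      = DF (t, cb t) ((0:ℝ), SG ((0:ℝ), DF (t, cb t) ((0:ℝ), deriv cb t))
            ((0:ℝ), DF (t, cb t) ((0:ℝ), deriv cb t))) i := by
    rw [← hmin]
    refine Finset.sum_congr rfl fun m _ => ?_
    rw [← hjin m]
    simp only [Finset.mul_sum]
    refine Finset.sum_congr rfl fun j _ => ?_
    rw [← hkin j m]
    simp only [Finset.mul_sum]
    refine Finset.sum_congr rfl fun k _ => ?_
    ring
  rw [hsum2, hsum3, hsum4]
  -- key first-order identities
  have I2x : ∀ (x w : Fin n → ℝ),
      DG (t, φ t x) ((0:ℝ), DF (t, x) ((0:ℝ), w)) = w := by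
    intro x w
    have hk1 : HasFDerivAt (fun y : Fin n → ℝ => φ t y)
        ((DF (t, x)).comp (ContinuousLinearMap.inr ℝ ℝ (Fin n → ℝ))) x :=
      (hDF (t, x)).comp _ (hasFDerivAt_prodMk_right t _)
    have hk2 : HasFDerivAt (fun q : Fin n → ℝ => ψ t q)
        ((DG (t, φ t x)).comp (ContinuousLinearMap.inr ℝ ℝ (Fin n → ℝ))) (φ t x) :=
      (hDG (t, φ t x)).comp _ (hasFDerivAt_prodMk_right t _)
    have hcomp := hk2.comp x hk1
    have hid : HasFDerivAt (fun y : Fin n → ℝ => ψ t (φ t y))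
        (ContinuousLinearMap.id ℝ (Fin n → ℝ)) x :=
      (hasFDerivAt_id x).congr_of_eventuallyEq (Filter.Eventually.of_forall fun y => hinv t y)
    have hEq := hcomp.unique hid
    have h5 := congrArg (fun (L : (Fin n → ℝ) →L[ℝ] (Fin n → ℝ)) => L w) hEq
    simpa using h5
  have I3 : ∀ w : Fin n → ℝ,
      DF (t, cb t) ((0:ℝ), DG (t, φ t (cb t)) ((0:ℝ), w)) = w := by
    intro w
    have hk1 : HasFDerivAt (fun q : Fin n → ℝ => ψ t q)
        ((DG (t, φ t (cb t))).comp (ContinuousLinearMap.inr ℝ ℝ (Fin n → ℝ))) (φ t (cb t)) :=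
      (hDG (t, φ t (cb t))).comp _ (hasFDerivAt_prodMk_right t _)
    have hk2 : HasFDerivAt (fun y : Fin n → ℝ => φ t y)
        ((DF (t, cb t)).comp (ContinuousLinearMap.inr ℝ ℝ (Fin n → ℝ))) (ψ t (φ t (cb t))) := by
      rw [hq0]
      exact (hDF (t, cb t)).comp _ (hasFDerivAt_prodMk_right t _)
    have hcomp := hk2.comp (φ t (cb t)) hk1
    have hid : HasFDerivAt (fun q : Fin n → ℝ => φ t (ψ t q))
        (ContinuousLinearMap.id ℝ (Fin n → ℝ)) (φ t (cb t)) :=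
      (hasFDerivAt_id (φ t (cb t))).congr_of_eventuallyEq
        (Filter.Eventually.of_forall fun q => hinv' t q)
    have hEq := hcomp.unique hid
    have h5 := congrArg (fun (L : (Fin n → ℝ) →L[ℝ] (Fin n → ℝ)) => L w) hEq
    simpa using h5
  have I1 : DG (t, φ t (cb t)) ((1:ℝ), DF (t, cb t) ((1:ℝ), (0 : Fin n → ℝ))) = 0 := by
    have hin : HasDerivAt (fun s : ℝ => φ s (cb t))
        (DF (t, cb t) ((1:ℝ), (0 : Fin n → ℝ))) t :=
      by have := (hDF (t, cb t)).comp_hasDerivAt t (HasDerivAt.prodMk (hasDerivAt_id t) (hasDerivAt_const t (cb t))); exact this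
    have hcurve : HasDerivAt (fun s : ℝ => ((s, φ s (cb t)) : ℝ × (Fin n → ℝ)))
        (1, DF (t, cb t) ((1:ℝ), (0 : Fin n → ℝ))) t := HasDerivAt.prodMk (hasDerivAt_id t) hin
    have hX : HasDerivAt (fun s => ψ s (φ s (cb t)))
        (DG (t, φ t (cb t)) (1, DF (t, cb t) ((1:ℝ), (0 : Fin n → ℝ)))) t :=
      by have := (hDG (t, φ t (cb t))).comp_hasDerivAt t hcurve; exact this
    have hconst : HasDerivAt (fun _ : ℝ => cb t)
        (DG (t, φ t (cb t)) (1, DF (t, cb t) ((1:ℝ), (0 : Fin n → ℝ)))) t :=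
      hX.congr_of_eventuallyEq (Filter.Eventually.of_forall fun s => (hinv s (cb t)).symm)
    exact hconst.unique (hasDerivAt_const t (cb t))
  -- second-order identity
  have hDFx : HasFDerivAt (fun x : Fin n → ℝ => DF (t, x))
      (S.comp (ContinuousLinearMap.inr ℝ ℝ (Fin n → ℝ))) (cb t) :=
    hSfd.comp _ (hasFDerivAt_prodMk_right t _)
  have hWp := hDFx.clm_apply
    (hasFDerivAt_const (((0:ℝ), deriv cb t) : ℝ × (Fin n → ℝ)) (cb t))
  have hk1' : HasFDerivAt (fun y : Fin n → ℝ => φ t y)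
      ((DF (t, cb t)).comp (ContinuousLinearMap.inr ℝ ℝ (Fin n → ℝ))) (cb t) :=
    (hDF (t, cb t)).comp _ (hasFDerivAt_prodMk_right t _)
  have hAmid : HasFDerivAt (fun x : Fin n → ℝ => ((t, φ t x) : ℝ × (Fin n → ℝ)))
      ((0 : (Fin n → ℝ) →L[ℝ] ℝ).prod
        ((DF (t, cb t)).comp (ContinuousLinearMap.inr ℝ ℝ (Fin n → ℝ)))) (cb t) :=
    HasFDerivAt.prodMk (hasFDerivAt_const t _) hk1'
  have hA : HasFDerivAt (fun x : Fin n → ℝ => DG (t, φ t x))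
      (SG.comp ((0 : (Fin n → ℝ) →L[ℝ] ℝ).prod
        ((DF (t, cb t)).comp (ContinuousLinearMap.inr ℝ ℝ (Fin n → ℝ))))) (cb t) :=
    hSGfd.comp (cb t) hAmid
  have hwfun := HasFDerivAt.prodMk (hasFDerivAt_const (0:ℝ) (cb t)) hWp
  have hbig := hA.clm_apply hwfun
  have hconstv : HasFDerivAt (fun _ : Fin n → ℝ => deriv cb t) _ (cb t) :=
    hbig.congr_of_eventuallyEq
      (Filter.Eventually.of_forall fun x => (I2x x (deriv cb t)).symm)
  have hzero := hconstv.unique (hasFDerivAt_const (deriv cb t) (cb t))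
  have I4v := congrArg (fun (L : (Fin n → ℝ) →L[ℝ] (Fin n → ℝ)) => L (deriv cb t)) hzero
  simp only [ContinuousLinearMap.add_apply, ContinuousLinearMap.coe_comp',
    Function.comp_apply, ContinuousLinearMap.prod_apply, ContinuousLinearMap.zero_apply,
    ContinuousLinearMap.inr_apply, ContinuousLinearMap.flip_apply,
    ContinuousLinearMap.comp_zero, ContinuousLinearMap.zero_comp,
    ContinuousLinearMap.coe_zero, Pi.zero_apply] at I4v
  rw [zero_add] at I4v
  -- final algebra
  have a1 : S (1, deriv cb t) (1, deriv cb t) i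
      = S ((1:ℝ), (0 : Fin n → ℝ)) ((1:ℝ), (0 : Fin n → ℝ)) i
        + S ((1:ℝ), (0 : Fin n → ℝ)) ((0:ℝ), deriv cb t) i
        + S ((0:ℝ), deriv cb t) ((1:ℝ), (0 : Fin n → ℝ)) i
        + S ((0:ℝ), deriv cb t) ((0:ℝ), deriv cb t) i := by
    have hp : ((1:ℝ), deriv cb t)
        = (((1:ℝ), (0 : Fin n → ℝ)) : ℝ × (Fin n → ℝ)) + ((0:ℝ), deriv cb t) := by simp
    rw [hp]
    simp only [map_add, ContinuousLinearMap.add_apply, Pi.add_apply]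
    ring
  have hsymvi : S ((1:ℝ), (0 : Fin n → ℝ)) ((0:ℝ), deriv cb t) i
      = S ((0:ℝ), deriv cb t) ((1:ℝ), (0 : Fin n → ℝ)) i := congrFun (hsym _ _) i
  have a3split : DF (t, cb t) (1, deriv cb t)
      = DF (t, cb t) ((1:ℝ), (0 : Fin n → ℝ)) + DF (t, cb t) ((0:ℝ), deriv cb t) := by
    rw [← map_add]
    congr 1
    simp
  have a3 : S (0, DG (t, φ t (cb t)) (0, DF (t, cb t) (1, deriv cb t))) ((1:ℝ), (0 : Fin n → ℝ)) i
      = S ((0:ℝ), DG (t, φ t (cb t)) ((0:ℝ), DF (t, cb t) ((1:ℝ), (0 : Fin n → ℝ))))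
          ((1:ℝ), (0 : Fin n → ℝ)) i
        + S ((0:ℝ), deriv cb t) ((1:ℝ), (0 : Fin n → ℝ)) i := by
    rw [a3split]
    have hp : (((0:ℝ), DF (t, cb t) ((1:ℝ), (0 : Fin n → ℝ)) + DF (t, cb t) ((0:ℝ), deriv cb t))
          : ℝ × (Fin n → ℝ))
        = ((0:ℝ), DF (t, cb t) ((1:ℝ), (0 : Fin n → ℝ)))
          + ((0:ℝ), DF (t, cb t) ((0:ℝ), deriv cb t)) := by simp
    rw [hp, map_add, I2x (cb t) (deriv cb t)]
    have hp2 : (((0:ℝ), DG (t, φ t (cb t)) ((0:ℝ), DF (t, cb t) ((1:ℝ), (0 : Fin n → ℝ))) + deriv cb t)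
          : ℝ × (Fin n → ℝ))
        = ((0:ℝ), DG (t, φ t (cb t)) ((0:ℝ), DF (t, cb t) ((1:ℝ), (0 : Fin n → ℝ))))
          + ((0:ℝ), deriv cb t) := by simp
    rw [hp2, map_add]
    simp [ContinuousLinearMap.add_apply]
  have a2 : S (1, DG (t, φ t (cb t)) (1, 0)) ((1:ℝ), (0 : Fin n → ℝ)) i
        + S ((0:ℝ), DG (t, φ t (cb t)) ((0:ℝ), DF (t, cb t) ((1:ℝ), (0 : Fin n → ℝ))))
            ((1:ℝ), (0 : Fin n → ℝ)) i
      = S ((1:ℝ), (0 : Fin n → ℝ)) ((1:ℝ), (0 : Fin n → ℝ)) i := by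
    have key1 : DG (t, φ t (cb t)) ((1:ℝ), (0 : Fin n → ℝ))
        + DG (t, φ t (cb t)) ((0:ℝ), DF (t, cb t) ((1:ℝ), (0 : Fin n → ℝ))) = 0 := by
      rw [← map_add]
      have hp : (((1:ℝ), (0 : Fin n → ℝ)) : ℝ × (Fin n → ℝ))
          + ((0:ℝ), DF (t, cb t) ((1:ℝ), (0 : Fin n → ℝ)))
          = ((1:ℝ), DF (t, cb t) ((1:ℝ), (0 : Fin n → ℝ))) := by simp
      rw [hp]
      exact I1
    have hp2 : (((1:ℝ), DG (t, φ t (cb t)) ((1:ℝ), (0 : Fin n → ℝ))) : ℝ × (Fin n → ℝ))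
        + ((0:ℝ), DG (t, φ t (cb t)) ((0:ℝ), DF (t, cb t) ((1:ℝ), (0 : Fin n → ℝ))))
        = ((1:ℝ), (0 : Fin n → ℝ)) := by
      rw [Prod.mk_add_mk, key1]
      norm_num
    calc S (1, DG (t, φ t (cb t)) (1, 0)) ((1:ℝ), (0 : Fin n → ℝ)) i
          + S ((0:ℝ), DG (t, φ t (cb t)) ((0:ℝ), DF (t, cb t) ((1:ℝ), (0 : Fin n → ℝ))))
              ((1:ℝ), (0 : Fin n → ℝ)) i
        = S ((((1:ℝ), DG (t, φ t (cb t)) ((1:ℝ), (0 : Fin n → ℝ))) : ℝ × (Fin n → ℝ))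
            + ((0:ℝ), DG (t, φ t (cb t)) ((0:ℝ), DF (t, cb t) ((1:ℝ), (0 : Fin n → ℝ)))))
            ((1:ℝ), (0 : Fin n → ℝ)) i := by
          rw [map_add]
          simp [ContinuousLinearMap.add_apply]
      _ = S ((1:ℝ), (0 : Fin n → ℝ)) ((1:ℝ), (0 : Fin n → ℝ)) i := by rw [hp2]
  have a4 : S (0, DG (t, φ t (cb t)) (0, DF (t, cb t) (0, deriv cb t))) ((1:ℝ), (0 : Fin n → ℝ)) i
      = S ((0:ℝ), deriv cb t) ((1:ℝ), (0 : Fin n → ℝ)) i := by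
    rw [I2x (cb t) (deriv cb t)]
  have hSGU : SG ((0:ℝ), DF (t, cb t) ((0:ℝ), deriv cb t)) ((0:ℝ), DF (t, cb t) ((0:ℝ), deriv cb t))
      = - DG (t, φ t (cb t)) ((0:ℝ), S ((0:ℝ), deriv cb t) ((0:ℝ), deriv cb t)) :=
    eq_neg_of_add_eq_zero_right I4v
  have a5 : DF (t, cb t) (0, SG (0, DF (t, cb t) (0, deriv cb t)) (0, DF (t, cb t) (0, deriv cb t))) i
      = - S ((0:ℝ), deriv cb t) ((0:ℝ), deriv cb t) i := by
    rw [hSGU]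
    have hp : (((0:ℝ), -DG (t, φ t (cb t)) ((0:ℝ), S ((0:ℝ), deriv cb t) ((0:ℝ), deriv cb t)))
          : ℝ × (Fin n → ℝ))
        = -((0:ℝ), DG (t, φ t (cb t)) ((0:ℝ), S ((0:ℝ), deriv cb t) ((0:ℝ), deriv cb t))) := by simp
    rw [hp, map_neg, I3]
    simp
  simp only [Pi.add_apply]
  linarith [a1, hsymvi, a2, a3, a4, a5]


private lemma lemI2 {n : ℕ} (φ ψ : ℝ → (Fin n → ℝ) → (Fin n → ℝ))
    (hφ : ContDiff ℝ (⊤ : ℕ∞) fun p : ℝ × (Fin n → ℝ) => φ p.1 p.2)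
    (hψ : ContDiff ℝ (⊤ : ℕ∞) fun p : ℝ × (Fin n → ℝ) => ψ p.1 p.2)
    (hinv : ∀ t x, ψ t (φ t x) = x) (t : ℝ) (x w : Fin n → ℝ) :
    fderiv ℝ (fun p : ℝ × (Fin n → ℝ) => ψ p.1 p.2) (t, φ t x)
      ((0:ℝ), fderiv ℝ (fun p : ℝ × (Fin n → ℝ) => φ p.1 p.2) (t, x) ((0:ℝ), w)) = w := by
  have hFd : Differentiable ℝ (fun p : ℝ × (Fin n → ℝ) => φ p.1 p.2) :=
    hφ.differentiable (by simp)
  have hGd : Differentiable ℝ (fun p : ℝ × (Fin n → ℝ) => ψ p.1 p.2) :=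
    hψ.differentiable (by simp)
  have hk1 : HasFDerivAt (fun y : Fin n → ℝ => φ t y)
      ((fderiv ℝ (fun p : ℝ × (Fin n → ℝ) => φ p.1 p.2) (t, x)).comp
        (ContinuousLinearMap.inr ℝ ℝ (Fin n → ℝ))) x :=
    (hFd (t, x)).hasFDerivAt.comp _ (hasFDerivAt_prodMk_right t _)
  have hk2 : HasFDerivAt (fun q : Fin n → ℝ => ψ t q)
      ((fderiv ℝ (fun p : ℝ × (Fin n → ℝ) => ψ p.1 p.2) (t, φ t x)).comp
        (ContinuousLinearMap.inr ℝ ℝ (Fin n → ℝ))) (φ t x) :=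
    (hGd (t, φ t x)).hasFDerivAt.comp _ (hasFDerivAt_prodMk_right t _)
  have hcomp := hk2.comp x hk1
  have hid : HasFDerivAt (fun y : Fin n → ℝ => ψ t (φ t y))
      (ContinuousLinearMap.id ℝ (Fin n → ℝ)) x :=
    (hasFDerivAt_id x).congr_of_eventuallyEq (Filter.Eventually.of_forall fun y => hinv t y)
  have hEq := hcomp.unique hid
  have h5 := congrArg (fun (L : (Fin n → ℝ) →L[ℝ] (Fin n → ℝ)) => L w) hEq
  simpa using h5

/-- a free motion equation `c̄'' = 0`, rewritten in arbitrary
time-dependent coordinates `q = φ(t, q̄)` (with inverse `q̄ = ψ(t, q)` and the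
frame connection `Γ^i(t,q) = ∂_t φ^i(t, ψ(t,q))`), takes the form (m188) whose
right-hand side is the general expression of an inertial force. -/
theorem free_motion_equation_in_arbitrary_coordinates (n : ℕ)
    (φ ψ : ℝ → (Fin n → ℝ) → (Fin n → ℝ))
    (hφ : ContDiff ℝ (⊤ : ℕ∞) fun p : ℝ × (Fin n → ℝ) => φ p.1 p.2)
    (hψ : ContDiff ℝ (⊤ : ℕ∞) fun p : ℝ × (Fin n → ℝ) => ψ p.1 p.2)
    (hinv : ∀ t x, ψ t (φ t x) = x) (hinv' : ∀ t q, φ t (ψ t q) = q)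
    (Γ : ℝ → (Fin n → ℝ) → Fin n → ℝ)
    (hΓ : ∀ t q i, Γ t q i = deriv (fun s => φ s (ψ t q) i) t)
    (cb : ℝ → Fin n → ℝ) (hcb : ContDiff ℝ (⊤ : ℕ∞) cb)
    (c : ℝ → Fin n → ℝ) (hc : ∀ t, c t = φ t (cb t)) :
    (∀ t, deriv (deriv cb) t = 0) ↔
    (∀ (t : ℝ) (i : Fin n), deriv (deriv c) t i =
      deriv (fun s => Γ s (c t) i) t
        + (∑ j : Fin n, deriv c t j * pdir (fun q => Γ t q i) (c t) j)
        + (∑ j : Fin n, pdir (fun q => Γ t q i) (c t) j * (deriv c t j - Γ t (c t) j))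
        - ∑ m : Fin n, ∑ j : Fin n, ∑ k : Fin n,
            pdir (fun x => φ t x i) (ψ t (c t)) m
              * pdir (fun q => pdir (fun q' => ψ t q' m) q k) (c t) j
              * (deriv c t j - Γ t (c t) j) * (deriv c t k - Γ t (c t) k)) := by
  constructor
  · intro h t i
    rw [master φ ψ hφ hψ hinv hinv' Γ hΓ cb hcb c hc t i, h t]
    simp [Prod.mk_zero_zero]
  · intro h t
    have hvec : fderiv ℝ (fun p : ℝ × (Fin n → ℝ) => φ p.1 p.2) (t, cb t)
        ((0:ℝ), deriv (deriv cb) t) = 0 := by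
      funext i
      have h1 := master φ ψ hφ hψ hinv hinv' Γ hΓ cb hcb c hc t i
      have h2 := h t i
      rw [h2] at h1
      have h3 : fderiv ℝ (fun p : ℝ × (Fin n → ℝ) => φ p.1 p.2) (t, cb t)
          ((0:ℝ), deriv (deriv cb) t) i = 0 := by linarith
      simpa using h3
    have h4 := lemI2 φ ψ hφ hψ hinv t (cb t) (deriv (deriv cb) t)
    rw [hvec] at h4
    have h5 : (((0:ℝ), (0 : Fin n → ℝ)) : ℝ × (Fin n → ℝ)) = 0 := by simp
    rw [h5, map_zero] at h4
    exact h4.symm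
end
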